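/- arXiv:1503.01239 — 2 statements merged into one kernel-verified Lean document; each statement's English description precedes it below -/
import Mathlib

section
/- Let μ > 0 and K ∈ ℝ^{s×t} of rank l, with singular value decomposition K = U Σ Vᵀ where U ∈ ℝ^{s×l}, V ∈ ℝ^{t×l} have orthonormal columns and Σ = diag(σ₁,…,σ_l) contains the positive singular values of K. Then the matrix D_μ(K) := U · diag(max{σ₁ − μ, 0}, …, max{σ_l − μ, 0}) · Vᵀ is a minimizer of the function L ↦ μ‖L‖_* + (1/2)‖L − K‖_F² over ℝ^{s×t}. -/
open Matrix BigOperators Finset Filter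

/-- Squared Frobenius norm. -/
noncomputable def frobSq {m n : ℕ} (A : Matrix (Fin m) (Fin n) ℝ) : ℝ :=
  ∑ i, ∑ j, (A i j) ^ 2

/-- Frobenius norm. -/
noncomputable def frob {m n : ℕ} (A : Matrix (Fin m) (Fin n) ℝ) : ℝ :=
  Real.sqrt (frobSq A)

/-- Entrywise ℓ₁ norm. -/
noncomputable def l1 {m n : ℕ} (A : Matrix (Fin m) (Fin n) ℝ) : ℝ :=
  ∑ i, ∑ j, |A i j|

/-- ℓ_{2,1} norm: sum of Euclidean norms of the rows. -/
noncomputable def l21 {m n : ℕ} (A : Matrix (Fin m) (Fin n) ℝ) : ℝ :=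
  ∑ i, Real.sqrt (∑ j, (A i j) ^ 2)

/-- Nuclear norm: sum of singular values (square roots of eigenvalues of AᵀA). -/
noncomputable def nuclearNorm {m n : ℕ} (A : Matrix (Fin m) (Fin n) ℝ) : ℝ :=
  ∑ i, Real.sqrt ((Matrix.isHermitian_conjTranspose_mul_self A).eigenvalues i)

/-- Matrix inner product ⟨P,Q⟩ = tr(PᵀQ). -/
noncomputable def minner {m n : ℕ} (A B : Matrix (Fin m) (Fin n) ℝ) : ℝ :=
  ∑ i, ∑ j, A i j * B i j

/-- ℓ_{2,0}: number of nonzero rows. -/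
noncomputable def l20 {m n : ℕ} (A : Matrix (Fin m) (Fin n) ℝ) : ℕ :=
  {i | A i ≠ 0}.ncard
lemma minner_eq_trace {m n : ℕ} (A B : Matrix (Fin m) (Fin n) ℝ) :
    minner A B = Matrix.trace (Aᵀ * B) := by
  simp [minner, Matrix.trace, Matrix.mul_apply, Matrix.diag]
  rw [Finset.sum_comm]

lemma cs {n : ℕ} (a b : Fin n → ℝ) :
    ∑ i, a i * b i ≤ Real.sqrt (∑ i, a i ^ 2) * Real.sqrt (∑ i, b i ^ 2) := by
  have h := Finset.sum_mul_sq_le_sq_mul_sq Finset.univ a b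
  calc ∑ i, a i * b i ≤ |∑ i, a i * b i| := le_abs_self _
    _ = Real.sqrt ((∑ i, a i * b i) ^ 2) := by rw [Real.sqrt_sq_eq_abs]
    _ ≤ Real.sqrt ((∑ i, a i ^ 2) * ∑ i, b i ^ 2) := Real.sqrt_le_sqrt h
    _ = _ := Real.sqrt_mul (by positivity) _

lemma sumsq_mulVec {a b : ℕ} (M : Matrix (Fin a) (Fin b) ℝ) (x : Fin b → ℝ) :
    ∑ i, (M.mulVec x i) ^ 2 = x ⬝ᵥ ((Mᵀ * M).mulVec x) := by
  rw [← Matrix.mulVec_mulVec, Matrix.dotProduct_mulVec, Matrix.vecMul_transpose]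
  simp [dotProduct, pow_two, mul_comm]

lemma quad_NDN {b r : ℕ} (N : Matrix (Fin b) (Fin r) ℝ) (c : Fin r → ℝ) (x : Fin b → ℝ) :
    x ⬝ᵥ ((N * Matrix.diagonal c * Nᵀ).mulVec x)
      = ∑ j, c j * (Nᵀ.mulVec x j) ^ 2 := by
  have e : (N * Matrix.diagonal c * Nᵀ) *ᵥ x = N *ᵥ (Matrix.diagonal c *ᵥ (Nᵀ *ᵥ x)) := by
    rw [← Matrix.mulVec_mulVec, ← Matrix.mulVec_mulVec]
  rw [e, Matrix.dotProduct_mulVec, ← Matrix.transpose_transpose N,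
    Matrix.vecMul_transpose, Matrix.transpose_transpose]
  simp only [dotProduct, Matrix.mulVec_diagonal]
  exact Finset.sum_congr rfl fun j _ => by ring

lemma opBound_of {a b r : ℕ} (M : Matrix (Fin a) (Fin b) ℝ) (N : Matrix (Fin b) (Fin r) ℝ)
    (c : Fin r → ℝ) (hN : Nᵀ * N = 1) (hc1 : ∀ j, c j ≤ 1)
    (h : Mᵀ * M = N * Matrix.diagonal c * Nᵀ) (x : Fin b → ℝ) :
    ∑ i, (M.mulVec x i) ^ 2 ≤ ∑ j, (x j) ^ 2 := by
  rw [sumsq_mulVec, h, quad_NDN]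
  have step1 : ∑ j, c j * (Nᵀ.mulVec x j) ^ 2 ≤ ∑ j, (Nᵀ.mulVec x j) ^ 2 := by
    apply Finset.sum_le_sum
    intro j _
    nlinarith [sq_nonneg (Nᵀ.mulVec x j), hc1 j]
  refine step1.trans ?_
  have e1 : ∑ j, (Nᵀ.mulVec x j) ^ 2 = x ⬝ᵥ ((N * Nᵀ).mulVec x) := by
    rw [sumsq_mulVec, Matrix.transpose_transpose]
  rw [e1]
  set P : Matrix (Fin b) (Fin b) ℝ := 1 - N * Nᵀ with hP
  have hPP : P * P = P := by
    simp only [hP, Matrix.sub_mul, Matrix.mul_sub, Matrix.one_mul, Matrix.mul_one]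
    rw [show N * Nᵀ * (N * Nᵀ) = N * (Nᵀ * N) * Nᵀ by simp only [Matrix.mul_assoc], hN]
    simp
  have hPT : Pᵀ = P := by
    simp [hP, Matrix.transpose_sub, Matrix.transpose_mul]
  have key : 0 ≤ x ⬝ᵥ (P.mulVec x) := by
    have e2 : x ⬝ᵥ (P.mulVec x) = (P.mulVec x) ⬝ᵥ (P.mulVec x) := by
      conv_lhs => rw [← hPP]
      rw [← Matrix.mulVec_mulVec, Matrix.dotProduct_mulVec]
      rw [show x ᵥ* P = Pᵀ *ᵥ x by rw [← Matrix.vecMul_transpose, Matrix.transpose_transpose], hPT]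
    rw [e2]
    exact Finset.sum_nonneg fun i _ => mul_self_nonneg _
  have expand : x ⬝ᵥ (P.mulVec x) = ∑ j, (x j)^2 - x ⬝ᵥ ((N * Nᵀ).mulVec x) := by
    simp [hP, Matrix.sub_mulVec, Matrix.one_mulVec, dotProduct, pow_two,
      mul_sub, Finset.sum_sub_distrib]
  linarith [key, expand.symm.le]

lemma minner_orth {s t : ℕ} (A B : Matrix (Fin s) (Fin t) ℝ) (W : Matrix (Fin t) (Fin t) ℝ)
    (h2 : W * Wᵀ = 1) : minner (A * W) (B * W) = minner A B := by
  rw [minner_eq_trace, minner_eq_trace, Matrix.transpose_mul, Matrix.mul_assoc Wᵀ,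
    Matrix.trace_mul_comm, Matrix.mul_assoc, Matrix.mul_assoc, h2, Matrix.mul_one]

lemma minner_col_sum {s t n : ℕ} (A B : Matrix (Fin s) (Fin t) ℝ) (W : Matrix (Fin t) (Fin n) ℝ) :
    minner (A * W) (B * W)
      = ∑ j, ∑ i, (A.mulVec (fun k => W k j)) i * (B.mulVec (fun k => W k j)) i := by
  rw [minner, Finset.sum_comm]
  simp [Matrix.mul_apply, Matrix.mulVec, dotProduct]

lemma dual_le {s t : ℕ} (G L : Matrix (Fin s) (Fin t) ℝ)
    (hG : ∀ x : Fin t → ℝ, ∑ i, (G.mulVec x i) ^ 2 ≤ ∑ j, (x j) ^ 2) :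
    minner G L ≤ nuclearNorm L := by
  set h := Matrix.isHermitian_conjTranspose_mul_self L with hh
  set W := (h.eigenvectorUnitary : Matrix (Fin t) (Fin t) ℝ) with hWdef
  have h1 : Wᵀ * W = 1 := by
    have := h.eigenvectorUnitary.2
    rw [Matrix.mem_unitaryGroup_iff'] at this
    simp [Matrix.star_eq_conjTranspose, Matrix.conjTranspose_eq_transpose_of_trivial] at this; exact this
  have h2 : W * Wᵀ = 1 := by
    have := h.eigenvectorUnitary.2
    rw [Matrix.mem_unitaryGroup_iff] at this
    simp [Matrix.star_eq_conjTranspose, Matrix.conjTranspose_eq_transpose_of_trivial] at this; exact this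
  have hs : Lᵀ * L = W * Matrix.diagonal h.eigenvalues * Wᵀ := by
    have := h.spectral_theorem
    simp [Matrix.star_eq_conjTranspose, Matrix.conjTranspose_eq_transpose_of_trivial,
      Function.comp] at this; exact this
  have key : minner G L
      = ∑ j, ∑ i, (G.mulVec (fun k => W k j)) i * (L.mulVec (fun k => W k j)) i := by
    rw [← minner_orth G L W h2, minner_col_sum]
  rw [key]
  have hnuc : nuclearNorm L = ∑ j, Real.sqrt (h.eigenvalues j) := rfl
  rw [hnuc]
  apply Finset.sum_le_sum
  intro j _
  set w : Fin t → ℝ := fun k => W k j with hw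
  have hWtW : ∀ k, (Wᵀ.mulVec w) k = (1 : Matrix (Fin t) (Fin t) ℝ) k j := by
    intro k
    have e : (Wᵀ * W) k j = (1 : Matrix (Fin t) (Fin t) ℝ) k j := by rw [h1]
    rw [← e]
    simp [Matrix.mulVec, Matrix.mul_apply, dotProduct, hw]
  have hwsq : ∑ k, (w k) ^ 2 = 1 := by
    have e : (Wᵀ * W) j j = (1 : Matrix (Fin t) (Fin t) ℝ) j j := by rw [h1]
    simp only [Matrix.mul_apply, Matrix.transpose_apply, Matrix.one_apply_eq] at e
    rw [← e]
    exact Finset.sum_congr rfl fun k _ => by rw [pow_two]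
  have hLw : ∑ i, (L.mulVec w i) ^ 2 = h.eigenvalues j := by
    rw [sumsq_mulVec, hs, quad_NDN]
    have : ∀ k, h.eigenvalues k * (Wᵀ.mulVec w k) ^ 2
        = if k = j then h.eigenvalues j else 0 := by
      intro k
      rw [hWtW k]
      by_cases hkj : k = j <;> simp [hkj, Matrix.one_apply, Ne.symm]
    rw [Finset.sum_congr rfl fun k _ => this k]
    simp
  have hlam0 : 0 ≤ h.eigenvalues j := by
    rw [← hLw]; positivity
  calc ∑ i, (G.mulVec w) i * (L.mulVec w) i
      ≤ Real.sqrt (∑ i, (G.mulVec w i) ^ 2) * Real.sqrt (∑ i, (L.mulVec w i) ^ 2) := cs _ _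
    _ ≤ 1 * Real.sqrt (h.eigenvalues j) := by
        rw [hLw]
        apply mul_le_mul_of_nonneg_right _ (Real.sqrt_nonneg _)
        rw [show (1 : ℝ) = Real.sqrt 1 by simp]
        apply Real.sqrt_le_sqrt
        exact (hG w).trans_eq hwsq
    _ = Real.sqrt (h.eigenvalues j) := one_mul _

lemma trace_WDWt {t n : ℕ} (W : Matrix (Fin t) (Fin n) ℝ) (hW1 : Wᵀ * W = 1)
    (d : Fin n → ℝ) : Matrix.trace (W * Matrix.diagonal d * Wᵀ) = ∑ j, d j := by
  rw [Matrix.trace_mul_cycle, hW1, Matrix.one_mul, Matrix.trace_diagonal]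

lemma exists_dual {s t : ℕ} (L : Matrix (Fin s) (Fin t) ℝ) :
    ∃ G : Matrix (Fin s) (Fin t) ℝ,
      (∀ x : Fin t → ℝ, ∑ i, (G.mulVec x i) ^ 2 ≤ ∑ j, (x j) ^ 2) ∧
      minner G L = nuclearNorm L := by
  set h := Matrix.isHermitian_conjTranspose_mul_self L with hh
  set W := (h.eigenvectorUnitary : Matrix (Fin t) (Fin t) ℝ) with hWdef
  set lam := h.eigenvalues with hlamdef
  have h1 : Wᵀ * W = 1 := by
    have := h.eigenvectorUnitary.2
    rw [Matrix.mem_unitaryGroup_iff'] at this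
    simp [Matrix.star_eq_conjTranspose, Matrix.conjTranspose_eq_transpose_of_trivial] at this; exact this
  have hs : Lᵀ * L = W * Matrix.diagonal lam * Wᵀ := by
    have := h.spectral_theorem
    simp [Matrix.star_eq_conjTranspose, Matrix.conjTranspose_eq_transpose_of_trivial,
      Function.comp] at this; exact this
  have hlam0 : ∀ j, 0 ≤ lam j := fun j =>
    Matrix.eigenvalues_conjTranspose_mul_self_nonneg L j
  set f : Fin t → ℝ := fun j => (Real.sqrt (lam j))⁻¹ with hf
  have hcan : ∀ {n : ℕ} (X : Matrix (Fin t) (Fin n) ℝ), Wᵀ * (W * X) = X := by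
    intro n X
    rw [← Matrix.mul_assoc, h1, Matrix.one_mul]
  refine ⟨L * W * Matrix.diagonal f * Wᵀ, ?_, ?_⟩
  · intro x
    apply opBound_of _ W (fun j => f j * lam j * f j) h1
    · intro j
      by_cases h0 : lam j = 0
      · simp [h0]
      · have hl : 0 < lam j := lt_of_le_of_ne (hlam0 j) (Ne.symm h0)
        have hsq : Real.sqrt (lam j) ≠ 0 := by positivity
        have : f j * lam j * f j = 1 := by
          rw [hf]
          field_simp
          rw [Real.sq_sqrt (hlam0 j)]
        rw [this]
      -- done cases
    · have hGtG : (L * W * Matrix.diagonal f * Wᵀ)ᵀ * (L * W * Matrix.diagonal f * Wᵀ)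
          = (W * Matrix.diagonal f * Wᵀ) * (Lᵀ * L) * (W * Matrix.diagonal f * Wᵀ) := by
        simp only [Matrix.transpose_mul, Matrix.transpose_transpose,
          Matrix.diagonal_transpose, Matrix.mul_assoc]
      rw [hGtG, hs]
      simp only [Matrix.mul_assoc]
      rw [hcan, hcan]
      rw [show Matrix.diagonal f * (Matrix.diagonal lam * (Matrix.diagonal f * Wᵀ))
          = (Matrix.diagonal f * Matrix.diagonal lam * Matrix.diagonal f) * Wᵀ by
        simp only [Matrix.mul_assoc]]
      rw [Matrix.diagonal_mul_diagonal, Matrix.diagonal_mul_diagonal]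
  · rw [minner_eq_trace]
    have hGt : (L * W * Matrix.diagonal f * Wᵀ)ᵀ * L
        = W * Matrix.diagonal f * Wᵀ * (Lᵀ * L) := by
      simp only [Matrix.transpose_mul, Matrix.transpose_transpose,
        Matrix.diagonal_transpose, Matrix.mul_assoc]
    rw [hGt, hs]
    simp only [Matrix.mul_assoc]
    rw [hcan]
    rw [show Matrix.diagonal f * (Matrix.diagonal lam * Wᵀ)
        = Matrix.diagonal (fun j => f j * lam j) * Wᵀ by
      rw [← Matrix.mul_assoc, Matrix.diagonal_mul_diagonal]]
    rw [show W * (Matrix.diagonal (fun j => f j * lam j) * Wᵀ)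
        = W * Matrix.diagonal (fun j => f j * lam j) * Wᵀ by simp only [Matrix.mul_assoc]]
    rw [trace_WDWt W h1]
    have hnuc : nuclearNorm L = ∑ j, Real.sqrt (lam j) := rfl
    rw [hnuc]
    apply Finset.sum_congr rfl
    intro j _
    by_cases h0 : lam j = 0
    · simp [hf, h0]
    · have hl : 0 < lam j := lt_of_le_of_ne (hlam0 j) (Ne.symm h0)
      have hsq : Real.sqrt (lam j) ≠ 0 := by positivity
      rw [hf]
      rw [show lam j = Real.sqrt (lam j) * Real.sqrt (lam j) from
        (Real.mul_self_sqrt (hlam0 j)).symm]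
      field_simp
      rw [Real.sqrt_sq (Real.sqrt_nonneg _)]

lemma UDV_entry {s t l : ℕ} (U : Matrix (Fin s) (Fin l) ℝ) (V : Matrix (Fin t) (Fin l) ℝ)
    (d : Fin l → ℝ) (i : Fin s) (j : Fin t) :
    (U * Matrix.diagonal d * Vᵀ) i j = ∑ k, U i k * d k * V j k := by
  simp [Matrix.mul_apply, Matrix.diagonal_apply, mul_ite, Finset.sum_ite_eq, mul_comm]

lemma UDVt_mul_UDV {s t l : ℕ} (U : Matrix (Fin s) (Fin l) ℝ) (V : Matrix (Fin t) (Fin l) ℝ)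
    (hU : Uᵀ * U = 1) (c d : Fin l → ℝ) :
    (U * Matrix.diagonal c * Vᵀ)ᵀ * (U * Matrix.diagonal d * Vᵀ)
      = V * Matrix.diagonal (fun i => c i * d i) * Vᵀ := by
  have e : (U * Matrix.diagonal c * Vᵀ)ᵀ * (U * Matrix.diagonal d * Vᵀ)
      = V * (Matrix.diagonal c * ((Uᵀ * U) * (Matrix.diagonal d * Vᵀ))) := by
    simp only [Matrix.transpose_mul, Matrix.transpose_transpose, Matrix.diagonal_transpose,
      Matrix.mul_assoc]
  rw [e, hU, Matrix.one_mul, ← Matrix.mul_assoc (Matrix.diagonal c),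
    Matrix.diagonal_mul_diagonal, ← Matrix.mul_assoc]

lemma minner_UDV {s t l : ℕ} (U : Matrix (Fin s) (Fin l) ℝ) (V : Matrix (Fin t) (Fin l) ℝ)
    (hU : Uᵀ * U = 1) (hV : Vᵀ * V = 1) (c d : Fin l → ℝ) :
    minner (U * Matrix.diagonal c * Vᵀ) (U * Matrix.diagonal d * Vᵀ) = ∑ i, c i * d i := by
  rw [minner_eq_trace, UDVt_mul_UDV U V hU, trace_WDWt V hV]

lemma trace_mul_diagonal {n : ℕ} (M : Matrix (Fin n) (Fin n) ℝ) (d : Fin n → ℝ) :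
    Matrix.trace (M * Matrix.diagonal d) = ∑ i, M i i * d i := by
  simp [Matrix.trace, Matrix.diag, Matrix.mul_apply, Matrix.diagonal_apply, mul_ite,
    Finset.sum_ite_eq]

lemma minner_le_sum {s t l : ℕ} (G : Matrix (Fin s) (Fin t) ℝ)
    (hG : ∀ x : Fin t → ℝ, ∑ i, (G.mulVec x i) ^ 2 ≤ ∑ j, (x j) ^ 2)
    (U : Matrix (Fin s) (Fin l) ℝ) (V : Matrix (Fin t) (Fin l) ℝ)
    (hU : Uᵀ * U = 1) (hV : Vᵀ * V = 1) (τ : Fin l → ℝ) (hτ : ∀ i, 0 ≤ τ i) :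
    minner G (U * Matrix.diagonal τ * Vᵀ) ≤ ∑ i, τ i := by
  rw [minner_eq_trace]
  have e : Gᵀ * (U * Matrix.diagonal τ * Vᵀ) = (Gᵀ * U * Matrix.diagonal τ) * Vᵀ := by
    simp only [Matrix.mul_assoc]
  rw [e, Matrix.trace_mul_comm, ← Matrix.mul_assoc, trace_mul_diagonal]
  apply Finset.sum_le_sum
  intro i _
  have entry : (Vᵀ * (Gᵀ * U)) i i = ∑ m, (G.mulVec (fun k => V k i)) m * U m i := by
    simp only [Matrix.mul_apply, Matrix.transpose_apply, Matrix.mulVec, dotProduct,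
      Finset.sum_mul]
    rw [Finset.sum_comm]
    refine Finset.sum_congr rfl fun m _ => ?_
    rw [Finset.mul_sum]
    exact Finset.sum_congr rfl fun k _ => by ring
  have hVcol : ∑ k, (V k i) ^ 2 = 1 := by
    have e : (Vᵀ * V) i i = (1 : Matrix (Fin l) (Fin l) ℝ) i i := by rw [hV]
    simp only [Matrix.mul_apply, Matrix.transpose_apply, Matrix.one_apply_eq] at e
    rw [← e]
    exact Finset.sum_congr rfl fun k _ => by rw [pow_two]
  have hUcol : ∑ m, (U m i) ^ 2 = 1 := by
    have e : (Uᵀ * U) i i = (1 : Matrix (Fin l) (Fin l) ℝ) i i := by rw [hU]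
    simp only [Matrix.mul_apply, Matrix.transpose_apply, Matrix.one_apply_eq] at e
    rw [← e]
    exact Finset.sum_congr rfl fun k _ => by rw [pow_two]
  have hbound : (Vᵀ * (Gᵀ * U)) i i ≤ 1 := by
    rw [entry]
    calc ∑ m, (G.mulVec (fun k => V k i)) m * U m i
        ≤ Real.sqrt (∑ m, (G.mulVec (fun k => V k i) m) ^ 2) * Real.sqrt (∑ m, (U m i) ^ 2) :=
          cs _ _
      _ ≤ 1 * 1 := by
          apply mul_le_mul
          · rw [show (1:ℝ) = Real.sqrt 1 by simp]
            exact Real.sqrt_le_sqrt ((hG _).trans_eq hVcol)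
          · rw [show (1:ℝ) = Real.sqrt 1 by simp, hUcol]
          · exact Real.sqrt_nonneg _
          · norm_num
      _ = 1 := by norm_num
  calc (Vᵀ * (Gᵀ * U)) i i * τ i ≤ 1 * τ i :=
        mul_le_mul_of_nonneg_right hbound (hτ i)
    _ = τ i := one_mul _

lemma minner_add_right {s t : ℕ} (G A B : Matrix (Fin s) (Fin t) ℝ) :
    minner G (A + B) = minner G A + minner G B := by
  simp [minner, Matrix.add_apply, mul_add, Finset.sum_add_distrib]

lemma frobSq_add {s t : ℕ} (A B : Matrix (Fin s) (Fin t) ℝ) :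
    frobSq (A + B) = frobSq A + 2 * minner A B + frobSq B := by
  simp only [frobSq, minner, Matrix.add_apply, Finset.mul_sum]
  rw [← Finset.sum_add_distrib, ← Finset.sum_add_distrib]
  refine Finset.sum_congr rfl fun i _ => ?_
  rw [← Finset.sum_add_distrib, ← Finset.sum_add_distrib]
  exact Finset.sum_congr rfl fun j _ => by ring

lemma frobSq_nonneg {s t : ℕ} (A : Matrix (Fin s) (Fin t) ℝ) : 0 ≤ frobSq A := by
  apply Finset.sum_nonneg
  intro i _
  exact Finset.sum_nonneg fun j _ => sq_nonneg _

/-- singular value shrinkage.  Let μ > 0 and K ∈ ℝ^{s×t} of rank l with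
SVD K = U Σ Vᵀ, where U, V have orthonormal columns and Σ = diag(σ₁,…,σ_l) contains the
positive singular values.  Then D_μ(K) = U diag(max{σᵢ − μ, 0}) Vᵀ minimizes
L ↦ μ‖L‖_* + (1/2)‖L − K‖_F². -/
theorem svt_is_minimizer {s t l : ℕ} (μ : ℝ) (hμ : 0 < μ)
    (K : Matrix (Fin s) (Fin t) ℝ)
    (U : Matrix (Fin s) (Fin l) ℝ) (V : Matrix (Fin t) (Fin l) ℝ) (σ : Fin l → ℝ)
    (hU : Uᵀ * U = 1) (hV : Vᵀ * V = 1) (hσ : ∀ i, 0 < σ i)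
    (hK : K = U * Matrix.diagonal σ * Vᵀ) (hrank : K.rank = l) :
    let D : Matrix (Fin s) (Fin t) ℝ :=
      U * Matrix.diagonal (fun i => max (σ i - μ) 0) * Vᵀ
    ∀ L : Matrix (Fin s) (Fin t) ℝ,
      μ * nuclearNorm D + (1 / 2) * frobSq (D - K)
        ≤ μ * nuclearNorm L + (1 / 2) * frobSq (L - K) := by


  intro D L
  have hDeq : D = U * Matrix.diagonal (fun i => max (σ i - μ) 0) * Vᵀ := rfl
  set τ : Fin l → ℝ := fun i => max (σ i - μ) 0 with hτdef
  have hτ0 : ∀ i, 0 ≤ τ i := fun i => le_max_right _ _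
  have hτσ : ∀ i, τ i ≤ σ i := fun i =>
    max_le (by linarith [hμ]) (hσ i).le
  have hστμ : ∀ i, σ i - τ i ≤ μ := fun i => by
    have := le_max_left (σ i - μ) 0
    simp only [hτdef]
    linarith
  set c : Fin l → ℝ := fun i => (σ i - τ i) / μ with hc
  have hc0 : ∀ i, 0 ≤ c i := fun i => div_nonneg (by linarith [hτσ i]) hμ.le
  have hc1 : ∀ i, c i ≤ 1 := fun i => (div_le_one hμ).2 (hστμ i)
  set G : Matrix (Fin s) (Fin t) ℝ := U * Matrix.diagonal c * Vᵀ with hGdef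
  have hGb : ∀ x : Fin t → ℝ, ∑ i, (G.mulVec x i) ^ 2 ≤ ∑ j, (x j) ^ 2 := by
    intro x
    apply opBound_of G V (fun i => c i * c i) hV
    · intro i
      nlinarith [hc0 i, hc1 i]
    · exact UDVt_mul_UDV U V hU c c
  -- nuclearNorm D = ∑ τ
  have hnucD : nuclearNorm D = ∑ i, τ i := by
    apply le_antisymm
    · obtain ⟨G0, hG0b, hG0e⟩ := exists_dual D
      rw [← hG0e]
      exact minner_le_sum G0 hG0b U V hU hV τ hτ0
    · have hb : ∀ x : Fin t → ℝ,
          ∑ i, ((U * Matrix.diagonal (fun _ : Fin l => (1:ℝ)) * Vᵀ).mulVec x i) ^ 2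
            ≤ ∑ j, (x j) ^ 2 := by
        intro x
        apply opBound_of _ V (fun i => (1:ℝ) * 1) hV (by norm_num)
        exact UDVt_mul_UDV U V hU _ _
      have := dual_le (U * Matrix.diagonal (fun _ : Fin l => (1:ℝ)) * Vᵀ) D hb
      rw [minner_UDV U V hU hV] at this
      simpa using this
  -- pointwise: K - D = μ • G
  have hKD : ∀ i j, (K - D) i j = μ * G i j := by
    intro i j
    have e1 : (K - D) i j = ∑ k, U i k * (σ k - τ k) * V j k := by
      rw [Matrix.sub_apply, hK, UDV_entry, hDeq, UDV_entry, ← Finset.sum_sub_distrib]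
      exact Finset.sum_congr rfl fun k _ => by ring
    have e2 : G i j = ∑ k, U i k * c k * V j k := UDV_entry U V c i j
    rw [e1, e2, Finset.mul_sum]
    refine Finset.sum_congr rfl fun k _ => ?_
    rw [hc]
    field_simp
  have hminnerKD : ∀ X : Matrix (Fin s) (Fin t) ℝ,
      minner (K - D) X = μ * minner G X := by
    intro X
    simp only [minner, Finset.mul_sum]
    exact Finset.sum_congr rfl fun i _ => Finset.sum_congr rfl fun j _ => by
      rw [hKD i j]; ring
  -- minner G D = ∑ τ
  have hGD : minner G D = ∑ i, τ i := by
    rw [hGdef, minner_UDV U V hU hV]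
    refine Finset.sum_congr rfl fun i _ => ?_
    have hci : c i = (σ i - τ i) / μ := rfl
    have hτi' : τ i = max (σ i - μ) 0 := rfl
    show c i * τ i = τ i
    rcases le_or_gt (σ i) μ with hle | hlt
    · have h0 : τ i = 0 := by rw [hτi']; exact max_eq_right (by linarith)
      rw [h0, mul_zero]
    · have h1 : τ i = σ i - μ := by rw [hτi']; exact max_eq_left (by linarith)
      rw [hci, h1]
      rw [show σ i - (σ i - μ) = μ from by ring, div_self hμ.ne', one_mul]
  -- decomposition of L - K
  have hdecomp : L - K = (L - D) + (D - K) := by abel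
  have hfrob : frobSq (L - K) = frobSq (L - D) + 2 * minner (L - D) (D - K)
      + frobSq (D - K) := by rw [hdecomp, frobSq_add]
  have hLD : L = D + (L - D) := by abel
  have hGL : minner G L = minner G D + minner G (L - D) := by
    conv_lhs => rw [hLD]
    rw [minner_add_right]
  have hdual : minner G L ≤ nuclearNorm L := dual_le G L hGb
  have hcancel : minner (K - D) (L - D) + minner (L - D) (D - K) = 0 := by
    simp only [minner, ← Finset.sum_add_distrib]
    apply Finset.sum_eq_zero
    intro i _
    apply Finset.sum_eq_zero
    intro j _
    simp only [Matrix.sub_apply]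
    ring
  have key : μ * minner G (L - D) = minner (K - D) (L - D) := (hminnerKD (L - D)).symm
  have hfnn : 0 ≤ frobSq (L - D) := frobSq_nonneg _
  have hmul : μ * minner G L ≤ μ * nuclearNorm L :=
    mul_le_mul_of_nonneg_left hdual hμ.le
  have expand : μ * minner G L = μ * (∑ i, τ i) + minner (K - D) (L - D) := by
    rw [hGL, mul_add, hGD, key]
  rw [hnucD, hfrob]
  linarith [hmul, expand, hcancel, hfnn]
end

section
/- Let X ∈ ℝ^{d×n}, T ∈ ℝ^{n×n}, α > 0, and β, γ, η ≥ 0. Then the function F(W) = ‖X − XWX‖_F² + α‖W‖_{2,1} + β‖Wᵀ‖_{2,1} + γ‖W‖_* + η‖T ⊙ (WX)‖₁ is coercive on ℝ^{n×d} (F(W) → ∞ as ‖W‖_F → ∞) and attains its infimum, i.e., there exists W* ∈ ℝ^{n×d} with F(W*) ≤ F(W) for all W ∈ ℝ^{n×d}. -/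
open Matrix BigOperators Finset Filter

namespace AlfsAux

open Polynomial

variable {d n m : ℕ}

lemma frobSq_nonneg (A : Matrix (Fin m) (Fin n) ℝ) : 0 ≤ frobSq A :=
  Finset.sum_nonneg fun _ _ => Finset.sum_nonneg fun _ _ => sq_nonneg _

lemma frob_nonneg (A : Matrix (Fin m) (Fin n) ℝ) : 0 ≤ frob A :=
  Real.sqrt_nonneg _

lemma l21_nonneg (A : Matrix (Fin m) (Fin n) ℝ) : 0 ≤ l21 A :=
  Finset.sum_nonneg fun _ _ => Real.sqrt_nonneg _

lemma l1_nonneg (A : Matrix (Fin m) (Fin n) ℝ) : 0 ≤ l1 A :=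
  Finset.sum_nonneg fun _ _ => Finset.sum_nonneg fun _ _ => abs_nonneg _

lemma nuclearNorm_nonneg (A : Matrix (Fin m) (Fin n) ℝ) : 0 ≤ nuclearNorm A :=
  Finset.sum_nonneg fun _ _ => Real.sqrt_nonneg _

lemma frob_le_l21 (A : Matrix (Fin m) (Fin n) ℝ) : frob A ≤ l21 A := by
  have h : frobSq A ≤ (l21 A) ^ 2 := by
    have h2 := Finset.sum_sq_le_sq_sum_of_nonneg (s := (Finset.univ : Finset (Fin m)))
      (f := fun i => Real.sqrt (∑ j, (A i j) ^ 2)) (fun i _ => Real.sqrt_nonneg _)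
    calc frobSq A = ∑ i, Real.sqrt (∑ j, (A i j) ^ 2) ^ 2 := by
          refine Finset.sum_congr rfl fun i _ => ?_
          rw [Real.sq_sqrt (Finset.sum_nonneg fun j _ => sq_nonneg _)]
      _ ≤ (l21 A) ^ 2 := h2
  calc frob A = Real.sqrt (frobSq A) := rfl
    _ ≤ Real.sqrt ((l21 A) ^ 2) := Real.sqrt_le_sqrt h
    _ = l21 A := Real.sqrt_sq (l21_nonneg A)

lemma abs_entry_le_frob (A : Matrix (Fin m) (Fin n) ℝ) (i : Fin m) (j : Fin n) :
    |A i j| ≤ frob A := by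
  have h1 : (A i j) ^ 2 ≤ frobSq A := by
    have h2 : (A i j) ^ 2 ≤ ∑ j', (A i j') ^ 2 :=
      Finset.single_le_sum (f := fun j' => (A i j') ^ 2) (fun _ _ => sq_nonneg _)
        (Finset.mem_univ j)
    exact h2.trans (Finset.single_le_sum (f := fun i' => ∑ j', (A i' j') ^ 2)
      (fun _ _ => Finset.sum_nonneg fun _ _ => sq_nonneg _) (Finset.mem_univ i))
  calc |A i j| = Real.sqrt ((A i j) ^ 2) := (Real.sqrt_sq_eq_abs _).symm
    _ ≤ frob A := Real.sqrt_le_sqrt h1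

/-- Conjugation by a unitary matrix as an `ℝ`-algebra homomorphism. -/
noncomputable def conjAH (U : Matrix (Fin n) (Fin n) ℝ)
    (hU : U ∈ Matrix.unitaryGroup (Fin n) ℝ) :
    Matrix (Fin n) (Fin n) ℝ →ₐ[ℝ] Matrix (Fin n) (Fin n) ℝ where
  toFun B := U * B * star U
  map_one' := by
    show U * 1 * star U = 1
    rw [mul_one]; exact Matrix.mem_unitaryGroup_iff.mp hU
  map_mul' A B := by
    have h2 : star U * U = 1 := Matrix.mem_unitaryGroup_iff'.mp hU
    show U * (A * B) * star U = (U * A * star U) * (U * B * star U)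
    simp only [mul_assoc]
    rw [← mul_assoc (star U) U, h2, one_mul]
  map_zero' := by simp
  map_add' A B := by simp [mul_add, add_mul]
  commutes' r := by
    have h1 : U * star U = 1 := Matrix.mem_unitaryGroup_iff.mp hU
    simp only [Algebra.algebraMap_eq_smul_one]
    rw [mul_smul_comm, mul_one, smul_mul_assoc, h1]

lemma conjAH_apply (U : Matrix (Fin n) (Fin n) ℝ) (hU : U ∈ Matrix.unitaryGroup (Fin n) ℝ)
    (B : Matrix (Fin n) (Fin n) ℝ) : conjAH U hU B = U * B * star U := rfl

lemma trace_aeval {M : Matrix (Fin n) (Fin n) ℝ} (hM : M.IsHermitian) (p : ℝ[X]) :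
    (aeval M p).trace = ∑ i, p.eval (hM.eigenvalues i) := by
  set U : Matrix (Fin n) (Fin n) ℝ := (hM.eigenvectorUnitary : Matrix (Fin n) (Fin n) ℝ)
    with hUdef
  have hU : U ∈ Matrix.unitaryGroup (Fin n) ℝ := hUdef ▸ (hM.eigenvectorUnitary).2
  have h2 : star U * U = 1 := Matrix.mem_unitaryGroup_iff'.mp hU
  have hcomp : (RCLike.ofReal ∘ hM.eigenvalues : Fin n → ℝ) = hM.eigenvalues := by
    funext i; simp
  have hspec : M = conjAH U hU (Matrix.diagonal hM.eigenvalues) := by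
    rw [conjAH_apply, ← hcomp]
    exact hM.spectral_theorem
  have hdiagaeval : aeval (Matrix.diagonal hM.eigenvalues) p
      = Matrix.diagonal (fun i => p.eval (hM.eigenvalues i)) := by
    have h3 : Matrix.diagonal hM.eigenvalues
        = Matrix.diagonalAlgHom (R := ℝ) hM.eigenvalues := rfl
    rw [h3, aeval_algHom_apply]
    have h4 : aeval hM.eigenvalues p = fun i => p.eval (hM.eigenvalues i) := by
      funext i
      rw [Polynomial.aeval_fn_apply]
      exact congrFun (Polynomial.coe_aeval_eq_eval _) p
    rw [h4]
    rfl
  have key : aeval M p = conjAH U hU (Matrix.diagonal fun i => p.eval (hM.eigenvalues i)) := by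
    conv_lhs => rw [hspec]
    rw [aeval_algHom_apply, hdiagaeval]
  rw [key, conjAH_apply, Matrix.trace_mul_cycle, h2, Matrix.one_mul, Matrix.trace_diagonal]

lemma eig_mem (A : Matrix (Fin d) (Fin n) ℝ) (i : Fin n) :
    (Matrix.isHermitian_conjTranspose_mul_self A).eigenvalues i ∈ Set.Icc 0 (frobSq A) := by
  have hH := Matrix.isHermitian_conjTranspose_mul_self A
  have hps : (Aᵀ * A).PosSemidef := by
    have h := Matrix.posSemidef_conjTranspose_mul_self A
    rwa [Matrix.conjTranspose_eq_transpose_of_trivial] at h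
  have h0 : ∀ j, 0 ≤ (Matrix.isHermitian_conjTranspose_mul_self A).eigenvalues j :=
    fun j => hps.eigenvalues_nonneg j
  refine ⟨h0 i, ?_⟩
  have hsum : ∑ j, (Matrix.isHermitian_conjTranspose_mul_self A).eigenvalues j = frobSq A := by
    have h1 := trace_aeval (Matrix.isHermitian_conjTranspose_mul_self A) (Polynomial.X : ℝ[X])
    simp only [Polynomial.eval_X, Polynomial.aeval_X] at h1
    rw [← h1, Matrix.trace, frobSq, Finset.sum_comm]
    refine Finset.sum_congr rfl fun j _ => ?_
    simp [Matrix.diag, Matrix.mul_apply, sq]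
  calc (Matrix.isHermitian_conjTranspose_mul_self A).eigenvalues i
      ≤ ∑ j, (Matrix.isHermitian_conjTranspose_mul_self A).eigenvalues j :=
        Finset.single_le_sum (fun j _ => h0 j) (Finset.mem_univ i)
    _ = frobSq A := hsum

lemma cont_entry (i : Fin m) (j : Fin n) :
    Continuous fun A : Matrix (Fin m) (Fin n) ℝ => A i j :=
  continuous_id.matrix_elem i j

lemma cont_frobSq : Continuous (frobSq (m := m) (n := n)) :=
  continuous_finset_sum _ fun i _ => continuous_finset_sum _ fun j _ => (cont_entry i j).pow 2

lemma cont_l21 : Continuous (l21 (m := m) (n := n)) :=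
  continuous_finset_sum _ fun i _ => Real.continuous_sqrt.comp <|
    continuous_finset_sum _ fun j _ => (cont_entry i j).pow 2

lemma cont_l1 : Continuous (l1 (m := m) (n := n)) :=
  continuous_finset_sum _ fun i _ => continuous_finset_sum _ fun j _ =>
    continuous_abs.comp (cont_entry i j)

lemma cont_nuclearNorm : Continuous fun A : Matrix (Fin d) (Fin n) ℝ => nuclearNorm A := by
  rw [continuous_iff_continuousAt]
  intro A₀
  rw [ContinuousAt, Metric.tendsto_nhds]
  intro ε hε
  set R : ℝ := frobSq A₀ + 1 with hR
  have hc : (0 : ℝ) < 3 * (n + 1) := by positivity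
  set δ : ℝ := ε / (3 * (n + 1)) with hδ
  have hδpos : 0 < δ := div_pos hε hc
  obtain ⟨p, hp⟩ := exists_polynomial_near_of_continuousOn 0 R Real.sqrt
    Real.continuous_sqrt.continuousOn δ hδpos
  set g : Matrix (Fin d) (Fin n) ℝ → ℝ := fun A => (aeval (Aᵀ * A) p).trace with hg
  have hgc : Continuous g := by
    have h1 : Continuous fun A : Matrix (Fin d) (Fin n) ℝ => Aᵀ * A :=
      (continuous_id.matrix_transpose).matrix_mul continuous_id
    exact ((p.continuous_aeval).comp h1).matrix_trace
  have key : ∀ A : Matrix (Fin d) (Fin n) ℝ, frobSq A ≤ R →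
      |nuclearNorm A - g A| ≤ n * δ := by
    intro A hA
    have hg2 : g A = ∑ i, p.eval ((Matrix.isHermitian_conjTranspose_mul_self A).eigenvalues i) :=
      trace_aeval _ p
    rw [hg2, nuclearNorm, ← Finset.sum_sub_distrib]
    calc |∑ i, (Real.sqrt ((Matrix.isHermitian_conjTranspose_mul_self A).eigenvalues i)
            - p.eval ((Matrix.isHermitian_conjTranspose_mul_self A).eigenvalues i))|
        ≤ ∑ i, |Real.sqrt ((Matrix.isHermitian_conjTranspose_mul_self A).eigenvalues i)
            - p.eval ((Matrix.isHermitian_conjTranspose_mul_self A).eigenvalues i)| :=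
          Finset.abs_sum_le_sum_abs _ _
      _ ≤ ∑ _i : Fin n, δ := by
          refine Finset.sum_le_sum fun i _ => ?_
          have hmem := eig_mem A i
          have hmem' : (Matrix.isHermitian_conjTranspose_mul_self A).eigenvalues i
              ∈ Set.Icc 0 R := ⟨hmem.1, hmem.2.trans hA⟩
          have := hp _ hmem'
          rw [abs_sub_comm]
          exact this.le
      _ = n * δ := by simp [mul_comm]
  have ev1 : ∀ᶠ A in nhds A₀, frobSq A ≤ R := by
    have hopen : IsOpen {A : Matrix (Fin d) (Fin n) ℝ | frobSq A < R} :=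
      isOpen_Iio.preimage cont_frobSq
    filter_upwards [hopen.mem_nhds (show frobSq A₀ < R by rw [hR]; linarith)] with A hA
    exact hA.le
  have ev2 : ∀ᶠ A in nhds A₀, |g A - g A₀| < δ := by
    have h := Metric.tendsto_nhds.mp (hgc.tendsto A₀) δ hδpos
    simpa [Real.dist_eq] using h
  filter_upwards [ev1, ev2] with A h1 h2
  have k1 := key A h1
  have k2 := key A₀ (by rw [hR]; linarith)
  rw [Real.dist_eq]
  have htri : |nuclearNorm A - nuclearNorm A₀| ≤ (n : ℝ) * δ + δ + (n : ℝ) * δ := by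
    have e : nuclearNorm A - nuclearNorm A₀
        = (nuclearNorm A - g A) + (g A - g A₀) + (g A₀ - nuclearNorm A₀) := by ring
    rw [e]
    refine (abs_add_le _ _).trans (add_le_add ((abs_add_le _ _).trans (add_le_add k1 h2.le)) ?_)
    rw [abs_sub_comm]; exact k2
  have hfin : (n : ℝ) * δ + δ + (n : ℝ) * δ < ε := by
    have he : ε = 3 * ((n : ℝ) + 1) * δ := by
      rw [hδ]; field_simp
    rw [he]; nlinarith [hδpos]
  linarith

end AlfsAux

/-- coercivity and attainment of the ALFS objective.  For α > 0 and
β, γ, η ≥ 0, F(W) = ‖X − XWX‖_F² + α‖W‖_{2,1} + β‖Wᵀ‖_{2,1} + γ‖W‖_* + η‖T ⊙ (WX)‖₁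
is coercive (F(W) → ∞ as ‖W‖_F → ∞) and attains its infimum. -/
theorem alfs_objective_coercive_and_attained {d n : ℕ}
    (X : Matrix (Fin d) (Fin n) ℝ) (T : Matrix (Fin n) (Fin n) ℝ)
    (α β γ η : ℝ) (hα : 0 < α) (hβ : 0 ≤ β) (hγ : 0 ≤ γ) (hη : 0 ≤ η) :
    let F : Matrix (Fin n) (Fin d) ℝ → ℝ := fun W =>
      frobSq (X - X * W * X) + α * l21 W + β * l21 Wᵀ + γ * nuclearNorm W
        + η * l1 (Matrix.hadamard T (W * X))
    Filter.Tendsto F (Filter.comap (fun W : Matrix (Fin n) (Fin d) ℝ => frob W)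
        Filter.atTop) Filter.atTop
    ∧ ∃ Wstar : Matrix (Fin n) (Fin d) ℝ, ∀ W, F Wstar ≤ F W := by
  intro F
  have hFdef : ∀ W, F W = frobSq (X - X * W * X) + α * l21 W + β * l21 Wᵀ
      + γ * nuclearNorm W + η * l1 (Matrix.hadamard T (W * X)) := fun _ => rfl
  have hFge : ∀ W, α * frob W ≤ F W := by
    intro W
    rw [hFdef]
    have h1 := AlfsAux.frobSq_nonneg (X - X * W * X)
    have h2 := mul_nonneg hβ (AlfsAux.l21_nonneg Wᵀ)
    have h3 := mul_nonneg hγ (AlfsAux.nuclearNorm_nonneg W)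
    have h4 := mul_nonneg hη (AlfsAux.l1_nonneg (Matrix.hadamard T (W * X)))
    have h5 : α * frob W ≤ α * l21 W :=
      mul_le_mul_of_nonneg_left (AlfsAux.frob_le_l21 W) hα.le
    linarith
  constructor
  · exact tendsto_atTop_mono hFge (tendsto_comap.const_mul_atTop hα)
  · have hFc : Continuous F := by
      have hXWX : Continuous fun W : Matrix (Fin n) (Fin d) ℝ => X - X * W * X := by
        have h : Continuous fun W : Matrix (Fin n) (Fin d) ℝ => X * W * X :=
          (continuous_const.matrix_mul continuous_id).matrix_mul continuous_const
        exact continuous_const.sub h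
      have hWX : Continuous fun W : Matrix (Fin n) (Fin d) ℝ => W * X :=
        continuous_id.matrix_mul continuous_const
      have hHad : Continuous fun W : Matrix (Fin n) (Fin d) ℝ =>
          Matrix.hadamard T (W * X) := by
        apply continuous_matrix
        intro i j
        simp only [Matrix.hadamard_apply]
        exact continuous_const.mul (hWX.matrix_elem i j)
      have hF : F = fun W => frobSq (X - X * W * X) + α * l21 W + β * l21 Wᵀ
          + γ * nuclearNorm W + η * l1 (Matrix.hadamard T (W * X)) := rfl
      rw [hF]
      exact ((((AlfsAux.cont_frobSq.comp hXWX).add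
        (continuous_const.mul AlfsAux.cont_l21)).add
        (continuous_const.mul (AlfsAux.cont_l21.comp continuous_id.matrix_transpose))).add
        (continuous_const.mul AlfsAux.cont_nuclearNorm)).add
        (continuous_const.mul (AlfsAux.cont_l1.comp hHad))
    set c : ℝ := F 0 / α + 1 with hc
    have hF0 : 0 ≤ F 0 := le_trans (mul_nonneg hα.le (AlfsAux.frob_nonneg 0)) (hFge 0)
    have hcpos : 0 < c := by
      have := div_nonneg hF0 hα.le
      rw [hc]; linarith
    set K : Set (Matrix (Fin n) (Fin d) ℝ) :=
      Set.univ.pi fun _ : Fin n => Set.univ.pi fun _ : Fin d => Set.Icc (-c) c with hK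
    have hKc : IsCompact K :=
      isCompact_univ_pi fun _ => isCompact_univ_pi fun _ => isCompact_Icc
    have h0K : (0 : Matrix (Fin n) (Fin d) ℝ) ∈ K := by
      rw [hK]
      intro i _
      intro j _
      exact ⟨neg_nonpos.mpr hcpos.le, hcpos.le⟩
    obtain ⟨Wstar, hWK, hmin⟩ := hKc.exists_isMinOn ⟨0, h0K⟩ hFc.continuousOn
    refine ⟨Wstar, fun W => ?_⟩
    by_cases hW : W ∈ K
    · exact isMinOn_iff.mp hmin W hW
    · have hex : ∃ i j, c < |W i j| := by
        by_contra h
        push_neg at h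
        apply hW
        rw [hK]
        intro i _
        intro j _
        exact ⟨neg_le_of_abs_le (h i j), le_of_abs_le (h i j)⟩
      obtain ⟨i, j, hij⟩ := hex
      have h1 : c < frob W := lt_of_lt_of_le hij (AlfsAux.abs_entry_le_frob W i j)
      have h2 : α * c < α * frob W := mul_lt_mul_of_pos_left h1 hα
      have h3 : F 0 < α * c := by
        rw [hc, mul_add, mul_one, mul_div_cancel₀ _ (ne_of_gt hα)]
        linarith
      refine le_of_lt ?_
      calc F Wstar ≤ F 0 := isMinOn_iff.mp hmin 0 h0K
        _ < α * c := h3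
        _ < α * frob W := h2
        _ ≤ F W := hFge W
end
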